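/- With μ_n the iterated squaring renormalization of μ as above, for every x ∈ D (the set of maximizers of μ) and every n, |μ_n(x) − 1/|D|| ≤ |S| · (M'/M)^{2^n}, where M = max μ and M' = max_{y ∉ D} μ(y) (with M' = 0 if D = S). In particular the convergence is super-exponential: (M'/M) < 1. -/

import Mathlib

/- STATEMENT 9: quantitative (super-exponential) convergence of the iterated squaring
renormalization: for every maximizer `x` of `μ` and every `n`,
`|μ_n(x) − 1/|D|| ≤ |S|·(M'/M)^{2^n}`, where `M = max μ`, `M' = max_{y ∉ D} μ(y)`
(`0` if `D = S`); moreover `M'/M < 1`. -/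
theorem iterated_squaring_superexponential_bound
    {S : Type*} [Fintype S] [Nonempty S] (μ : S → ℝ)
    (h0 : ∀ x, 0 ≤ μ x) (h1 : ∑ x, μ x = 1) :
    (∀ x, (∀ y, μ y ≤ μ x) → ∀ n : ℕ,
      |μ x ^ (2 ^ n) / (∑ y, μ y ^ (2 ^ n)) -
          1 / (Nat.card {z : S | ∀ y, μ y ≤ μ z} : ℝ)| ≤
        (Fintype.card S : ℝ) *
          (sSup (μ '' {y | μ y < sSup (Set.range μ)}) / sSup (Set.range μ)) ^ (2 ^ n)) ∧
    sSup (μ '' {y | μ y < sSup (Set.range μ)}) / sSup (Set.range μ) < 1 := by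
  classical
  obtain ⟨x0, hx0⟩ := Finite.exists_max μ
  set M := sSup (Set.range μ) with hMdef
  have hbdd : BddAbove (Set.range μ) := (Set.finite_range μ).bddAbove
  have hMle : M ≤ μ x0 :=
    csSup_le (Set.range_nonempty μ) (by rintro _ ⟨y, rfl⟩; exact hx0 y)
  have hle : ∀ y, μ y ≤ M := fun y => le_csSup hbdd ⟨y, rfl⟩
  have hMx0 : M = μ x0 := le_antisymm hMle (hle x0)
  have hMpos : 0 < M := by
    by_contra h
    push_neg at h
    have : (∑ x, μ x) ≤ 0 := Finset.sum_nonpos (fun y _ => (hle y).trans h)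
    linarith
  set M' := sSup (μ '' {y | μ y < M}) with hM'def
  have hM'nonneg : 0 ≤ M' := by
    rcases Set.eq_empty_or_nonempty {y | μ y < M} with h | h
    · rw [hM'def, h, Set.image_empty, Real.sSup_empty]
    · obtain ⟨y, hy, hyM⟩ :=
        (h.image μ).csSup_mem ((Set.finite_range μ).subset (Set.image_subset_range _ _))
      rw [hM'def, ← hyM]; exact h0 y
  have hM'lt : M' < M := by
    rcases Set.eq_empty_or_nonempty {y | μ y < M} with h | h
    · rw [hM'def, h, Set.image_empty, Real.sSup_empty]; exact hMpos
    · obtain ⟨y, hy, hyM⟩ :=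
        (h.image μ).csSup_mem ((Set.finite_range μ).subset (Set.image_subset_range _ _))
      rw [hM'def, ← hyM]; exact hy
  have hM'le : ∀ y, μ y < M → μ y ≤ M' := fun y hy =>
    le_csSup (((Set.finite_range μ).subset (Set.image_subset_range _ _)).bddAbove)
      ⟨y, hy, rfl⟩
  refine ⟨?_, by rw [div_lt_one hMpos]; exact hM'lt⟩
  intro x hx n
  have hμxM : μ x = M := le_antisymm (hle x)
    (csSup_le (Set.range_nonempty μ) (by rintro _ ⟨y, rfl⟩; exact hx y))
  set N := 2 ^ n
  set Dfin := Finset.univ.filter (fun z => M ≤ μ z) with hDfin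
  have hcard : (Nat.card {z : S | ∀ y, μ y ≤ μ z} : ℝ) = (Dfin.card : ℝ) := by
    congr 1
    have hset : {z : S | ∀ y, μ y ≤ μ z} = {z : S | M ≤ μ z} := by
      ext z
      constructor
      · intro h; exact hMx0 ▸ h x0
      · intro h y; exact (hle y).trans h
    rw [hset]
    simp [Nat.card_eq_fintype_card, Fintype.card_subtype, Dfin]
  set kR : ℝ := (Dfin.card : ℝ) with hkR
  have hk1 : (1 : ℝ) ≤ kR := by
    have : x0 ∈ Dfin := by simp [Dfin, hMx0.le]
    have : 1 ≤ Dfin.card := Finset.card_pos.mpr ⟨x0, this⟩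
    rw [hkR]; exact_mod_cast this
  set a : ℝ := M ^ N with ha
  have hapos : 0 < a := pow_pos hMpos N
  set Rsum : ℝ := ∑ y ∈ Finset.univ.filter (fun z => ¬ M ≤ μ z), μ y ^ N with hRs
  have hsplit : (∑ y, μ y ^ N) = kR * a + Rsum := by
    rw [← Finset.sum_filter_add_sum_filter_not Finset.univ (fun z => M ≤ μ z)]
    congr 1
    rw [Finset.sum_congr rfl (fun y hy => by
      rw [le_antisymm (hle y) (Finset.mem_filter.mp hy).2]), Finset.sum_const,
      nsmul_eq_mul]
  have hRnonneg : 0 ≤ Rsum :=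
    Finset.sum_nonneg fun y _ => pow_nonneg (h0 y) N
  set C : ℝ := (Fintype.card S : ℝ) * (M' / M) ^ N with hC
  have hCnonneg : 0 ≤ C :=
    mul_nonneg (Nat.cast_nonneg _) (pow_nonneg (div_nonneg hM'nonneg hMpos.le) N)
  have hRle : Rsum ≤ C * a := by
    have : Rsum ≤ (Finset.univ.filter (fun z => ¬ M ≤ μ z)).card • (M' ^ N) := by
      apply Finset.sum_le_card_nsmul
      intro y hy
      exact pow_le_pow_left₀ (h0 y) (hM'le y (lt_of_not_ge (Finset.mem_filter.mp hy).2)) N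
    have hCa : C * a = (Fintype.card S : ℝ) * M' ^ N := by
      rw [hC, ha, mul_assoc, div_pow, div_mul_cancel₀]
      exact pow_ne_zero _ hMpos.ne'
    rw [hCa]
    refine this.trans ?_
    rw [nsmul_eq_mul]
    apply mul_le_mul_of_nonneg_right _ (pow_nonneg hM'nonneg N)
    exact_mod_cast Finset.card_filter_le _ _
  have hSge : a ≤ kR * a + Rsum := by nlinarith
  have hkRpos : 0 < kR := lt_of_lt_of_le one_pos hk1
  have hSpos : 0 < kR * a + Rsum := lt_of_lt_of_le hapos hSge
  rw [hcard, hμxM, hsplit]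
  have habs : |a / (kR * a + Rsum) - 1 / kR| = 1 / kR - a / (kR * a + Rsum) := by
    rw [abs_of_nonpos]
    · ring
    · rw [sub_nonpos, div_le_div_iff₀ hSpos hkRpos]
      nlinarith
  rw [habs]
  have heq : 1 / kR - a / (kR * a + Rsum) = Rsum / (kR * (kR * a + Rsum)) := by
    field_simp
    ring
  rw [heq]
  calc Rsum / (kR * (kR * a + Rsum)) ≤ (C * a) / a := by
        apply div_le_div₀ (mul_nonneg hCnonneg hapos.le) hRle hapos
        nlinarith
    _ = C := by field_simp
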